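/- For a vertex u of a finite simple graph G with neighborhood N(u), the number of edges of G ⋆ u equals |E(G)| + C(|N(u)|, 2) − 2·e_G(N(u)), where e_G(N(u)) is the number of edges of G with both endpoints in N(u). -/

import Mathlib

/-- Local complementation of `G` at `u`: adjacency between two distinct common
neighbors of `u` is toggled; all other adjacencies are unchanged. -/
def localComp {V : Type*} (G : SimpleGraph V) (u : V) : SimpleGraph V where
  Adj v w := v ≠ w ∧ Xor' (G.Adj v w) (G.Adj u v ∧ G.Adj u w)
  symm := by
    constructor
    intro v w h
    refine ⟨h.1.symm, ?_⟩
    rcases h.2 with ⟨ha, hb⟩ | ⟨ha, hb⟩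
    · exact Or.inl ⟨G.adj_symm ha, fun hc => hb ⟨hc.2, hc.1⟩⟩
    · exact Or.inr ⟨⟨ha.2, ha.1⟩, fun hc => hb (G.adj_symm hc)⟩
  loopless := ⟨fun v h => h.1 rfl⟩

instance {V : Type*} (G : SimpleGraph V) [DecidableRel G.Adj] [DecidableEq V] (u : V) :
    DecidableRel (localComp G u).Adj := fun v w =>
  inferInstanceAs (Decidable (v ≠ w ∧ (G.Adj v w ∧ ¬(G.Adj u v ∧ G.Adj u w) ∨
      (G.Adj u v ∧ G.Adj u w) ∧ ¬G.Adj v w)))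

/-- The number of edges of `G` with both endpoints in the set `s` (each unordered
edge is counted once: ordered adjacent pairs divided by two). -/
def edgesWithin {V : Type*} [Fintype V] [DecidableEq V] (G : SimpleGraph V)
    [DecidableRel G.Adj] (s : Finset V) : ℕ :=
  (Finset.univ.filter (fun p : V × V => p.1 ∈ s ∧ p.2 ∈ s ∧ G.Adj p.1 p.2)).card / 2

open Finset

/-- A finset of ordered pairs that is swap-invariant and off-diagonal has even cardinality. -/
lemma even_card_of_swap {α : Type*} [Fintype α] [DecidableEq α] (S : Finset (α × α))
    (hsym : ∀ p ∈ S, (p.2, p.1) ∈ S) (hne : ∀ p ∈ S, p.1 ≠ p.2) : Even S.card := by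
  classical
  letI : LinearOrder α := LinearOrder.lift' (Fintype.equivFin α) (Fintype.equivFin α).injective
  have hsplit : S = S.filter (fun p => p.1 < p.2) ∪ S.filter (fun p => p.2 < p.1) := by
    ext p
    simp only [mem_union, mem_filter]
    constructor
    · intro hp
      rcases lt_or_gt_of_ne (hne p hp) with h | h
      · exact Or.inl ⟨hp, h⟩
      · exact Or.inr ⟨hp, h⟩
    · rintro (⟨hp, _⟩ | ⟨hp, _⟩) <;> exact hp
  have himg : S.filter (fun p => p.2 < p.1) = (S.filter (fun p => p.1 < p.2)).image Prod.swap := by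
    ext ⟨a, b⟩
    simp only [mem_image, mem_filter, Prod.exists]
    constructor
    · rintro ⟨hp, hlt⟩
      exact ⟨b, a, ⟨hsym _ hp, hlt⟩, rfl⟩
    · rintro ⟨x, y, ⟨hp, hlt⟩, hs⟩
      have : (x, y).swap = (y, x) := rfl
      rw [this] at hs
      cases hs
      exact ⟨hsym _ hp, hlt⟩
  have hdisj : Disjoint (S.filter (fun p => p.1 < p.2)) (S.filter (fun p => p.2 < p.1)) := by
    rw [Finset.disjoint_left]
    rintro p hp hq
    exact absurd (mem_filter.1 hq).2 (not_lt_of_gt (mem_filter.1 hp).2)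
  rw [hsplit, card_union_of_disjoint hdisj, himg,
    card_image_of_injective _ Prod.swap_injective]
  exact ⟨_, rfl⟩

/-- Edge count after local complementation:
`|E(G ⋆ u)| = |E(G)| + C(|N(u)|, 2) - 2 · e_G(N(u))`. -/
theorem localComp_edgeCount {V : Type*} [Fintype V] [DecidableEq V]
    (G : SimpleGraph V) [DecidableRel G.Adj] (u : V) :
    ((localComp G u).edgeFinset.card : ℤ) =
      (G.edgeFinset.card : ℤ) + ((G.degree u).choose 2 : ℤ)
        - 2 * (edgesWithin G (G.neighborFinset u) : ℤ) := by
  classical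
  set N := G.neighborFinset u with hN
  set A : Finset (V × V) := univ.filter (fun p : V × V => G.Adj p.1 p.2) with hA
  set B : Finset (V × V) :=
    univ.filter (fun p : V × V => p.1 ≠ p.2 ∧ G.Adj u p.1 ∧ G.Adj u p.2) with hB
  set C : Finset (V × V) :=
    univ.filter (fun p : V × V => p.1 ∈ N ∧ p.2 ∈ N ∧ G.Adj p.1 p.2) with hC
  set A' : Finset (V × V) := univ.filter (fun p : V × V => (localComp G u).Adj p.1 p.2) with hA'
  -- C = A ∩ B
  have hCAB : C = A ∩ B := by
    ext ⟨v, w⟩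
    simp only [hC, hA, hB, mem_inter, mem_filter, mem_univ, true_and,
      SimpleGraph.mem_neighborFinset, hN]
    constructor
    · rintro ⟨h1, h2, h3⟩
      exact ⟨h3, h3.ne, h1, h2⟩
    · rintro ⟨h3, _, h1, h2⟩
      exact ⟨h1, h2, h3⟩
  -- A' = (A \ B) ∪ (B \ A)
  have hA'eq : A' = (A \ B) ∪ (B \ A) := by
    ext ⟨v, w⟩
    simp only [hA', hA, hB, mem_union, mem_sdiff, mem_filter, mem_univ, true_and]
    show v ≠ w ∧ Xor' (G.Adj v w) (G.Adj u v ∧ G.Adj u w) ↔ _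
    constructor
    · rintro ⟨hne, h | h⟩
      · exact Or.inl ⟨h.1, fun hc => h.2 hc.2⟩
      · exact Or.inr ⟨⟨hne, h.1⟩, h.2⟩
    · rintro (⟨ha, hb⟩ | ⟨⟨hne, hb⟩, ha⟩)
      · exact ⟨ha.ne, Or.inl ⟨ha, fun hc => hb ⟨ha.ne, hc⟩⟩⟩
      · exact ⟨hne, Or.inr ⟨hb, ha⟩⟩
  -- cardinality of A'
  have hsub1 : A ∩ B ⊆ A := inter_subset_left
  have hsub2 : A ∩ B ⊆ B := inter_subset_right
  have hcardA' : (A'.card : ℤ) = A.card + B.card - 2 * (A ∩ B).card := by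
    rw [hA'eq, card_union_of_disjoint disjoint_sdiff_sdiff]
    have h1 : (A \ B).card = A.card - (A ∩ B).card := by
      rw [← card_sdiff_of_subset hsub1]
      congr 1
      rw [sdiff_inter_self_left]
    have h2 : (B \ A).card = B.card - (A ∩ B).card := by
      rw [← card_sdiff_of_subset hsub2]
      congr 1
      rw [inter_comm, sdiff_inter_self_left]
    rw [h1, h2]
    push_cast [Nat.cast_sub (card_le_card hsub1), Nat.cast_sub (card_le_card hsub2)]
    ring
  -- B is the off-diagonal of N
  have hBoff : B = N.offDiag := by
    ext ⟨v, w⟩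
    simp only [hB, mem_filter, mem_univ, true_and, Finset.mem_offDiag,
      SimpleGraph.mem_neighborFinset, hN]
    tauto
  have hdeg : N.card = G.degree u := rfl
  have hBcard : B.card = G.degree u * G.degree u - G.degree u := by
    rw [hBoff, Finset.offDiag_card, hdeg]
  -- 2 * choose 2 = d*d - d
  have hchoose : 2 * (G.degree u).choose 2 = G.degree u * G.degree u - G.degree u := by
    set d := G.degree u
    have heven : Even (d * (d - 1)) := by
      rcases d with _ | n
      · simp
      · simpa [Nat.succ_sub_one, mul_comm] using Nat.even_mul_succ_self n
    have hdd : d * d = d * (d - 1) + d := by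
      rcases d with _ | n
      · rfl
      · rw [Nat.succ_sub_one]; ring
    rw [Nat.choose_two_right, Nat.mul_div_cancel' heven.two_dvd]
    omega
  -- 2 * edgesWithin = C.card
  have hEW : 2 * edgesWithin G N = C.card := by
    have heven : Even C.card := by
      apply even_card_of_swap
      · rintro ⟨v, w⟩ hp
        simp only [hC, mem_filter, mem_univ, true_and] at hp ⊢
        exact ⟨hp.2.1, hp.1, hp.2.2.symm⟩
      · rintro ⟨v, w⟩ hp
        simp only [hC, mem_filter, mem_univ, true_and] at hp
        exact hp.2.2.ne
    rw [edgesWithin]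
    rw [Nat.mul_div_cancel' heven.two_dvd]
  -- ordered-pair counts
  have hG2 : 2 * G.edgeFinset.card = A.card := by
    simpa using G.two_mul_card_edgeFinset
  have hL2 : 2 * (localComp G u).edgeFinset.card = A'.card := by
    simpa using (localComp G u).two_mul_card_edgeFinset
  -- put it together over ℤ
  have key : (2 : ℤ) * ((localComp G u).edgeFinset.card : ℤ) =
      2 * ((G.edgeFinset.card : ℤ) + ((G.degree u).choose 2 : ℤ)
        - 2 * (edgesWithin G N : ℤ)) := by
    have e1 : (A'.card : ℤ) = 2 * (localComp G u).edgeFinset.card := by exact_mod_cast hL2.symm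
    have e2 : (A.card : ℤ) = 2 * G.edgeFinset.card := by exact_mod_cast hG2.symm
    have e3 : (B.card : ℤ) = 2 * (G.degree u).choose 2 := by
      rw [hBcard, ← hchoose]; push_cast; ring
    have e4 : ((A ∩ B).card : ℤ) = 2 * edgesWithin G N := by
      rw [← hCAB]; exact_mod_cast hEW.symm
    rw [← e1, hcardA', e2, e3, e4]
    ring
  linarith
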